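/- For all real numbers $x \ge y > 0$ and all $q \in (0,1)$, one has $(x+y)^q \le x^q + q y^q$. -/

import Mathlib

theorem stmt_0 (x y q : ℝ) (hy : 0 < y) (hxy : y ≤ x) (hq0 : 0 < q) (hq1 : q < 1) :
    (x + y) ^ q ≤ x ^ q + q * y ^ q := by
  have hx : 0 < x := lt_of_lt_of_le hy hxy
  have hlt : x < x + y := by linarith
  have hcont : ContinuousOn (fun t : ℝ => t ^ q) (Set.Icc x (x + y)) := by
    intro t ht
    exact (Real.continuousAt_rpow_const t q (Or.inl (by nlinarith [ht.1]))).continuousWithinAt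
  have hderiv : ∀ t ∈ Set.Ioo x (x + y),
      HasDerivAt (fun t : ℝ => t ^ q) (q * t ^ (q - 1)) t := by
    intro t ht
    have htpos : 0 < t := lt_trans hx ht.1
    simpa [mul_comm] using Real.hasDerivAt_rpow_const (p := q) (Or.inl htpos.ne')
  obtain ⟨c, hc, hceq⟩ := exists_hasDerivAt_eq_slope (fun t : ℝ => t ^ q)
    (fun t => q * t ^ (q - 1)) hlt hcont hderiv
  have hcx : y ≤ c := le_trans hxy hc.1.le
  have hcpos : 0 < c := lt_of_lt_of_le hy hcx
  have hmono : c ^ (q - 1) ≤ y ^ (q - 1) :=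
    Real.rpow_le_rpow_of_nonpos hy hcx (by linarith)
  have heq : (x + y) ^ q - x ^ q = q * c ^ (q - 1) * y := by
    have : x + y - x = y := by ring
    field_simp [this] at hceq
    rw [this, eq_div_iff hy.ne'] at hceq; linarith [hceq]
  have hyq : y ^ (q - 1) * y = y ^ q := by
    rw [← Real.rpow_add_one hy.ne', sub_add_cancel]
  have := mul_le_mul_of_nonneg_left hmono (le_of_lt (mul_pos hq0 hy))
  nlinarith
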